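/- Let 2 ≤ N ≤ n be integers. Then for every integer m ≥ 1, the alternating sum ∑_{ℓ ≥ 0, ν_N(ℓ) ≤ m} (-1)^ℓ C(n, ν_N(ℓ)) · L(n, N, m − ν_N(ℓ)) equals 0, with the convention C(n,j) = 0 for j > n. -/

import Mathlib

/-- The jump map `ν_N : ℕ → ℕ`, `ν_N(2i) = Ni`, `ν_N(2i+1) = Ni + 1`. -/
def nuN (N l : ℕ) : ℕ := N * (l / 2) + l % 2

/-- A word with letters in `{1,…,n}` (modeled as `Fin n`) is admissible if it contains
no `N`-descent, i.e. no contiguous strictly decreasing subword of length `N`. -/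
def Admissible (n N : ℕ) (l : List (Fin n)) : Prop :=
  ¬ ∃ w : List (Fin n), w.length = N ∧ w.Chain' (· > ·) ∧ w <:+: l

/-- `L n N k` is the number of admissible words of length `k` with letters in `{1,…,n}`. -/
noncomputable def Lword (n N k : ℕ) : ℕ :=
  Nat.card {l : List (Fin n) // l.length = k ∧ Admissible n N l}

namespace AntiProof

variable {n N : ℕ}

/-! ### Arithmetic facts about `nuN` -/

lemma le_nuN (h2 : 2 ≤ N) (ℓ : ℕ) : ℓ ≤ nuN N ℓ := by
  have h : 2 * (ℓ / 2) ≤ N * (ℓ / 2) := Nat.mul_le_mul_right _ h2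
  unfold nuN; omega

lemma nuN_succ_even {ℓ : ℕ} (h : ℓ % 2 = 0) : nuN N (ℓ + 1) = nuN N ℓ + 1 := by
  unfold nuN
  have e1 : (ℓ + 1) / 2 = ℓ / 2 := by omega
  have e2 : (ℓ + 1) % 2 = 1 := by omega
  rw [e1, e2, h]

lemma nuN_succ_odd {ℓ : ℕ} (h : ℓ % 2 = 1) : nuN N (ℓ + 1) = nuN N ℓ + N - 1 := by
  unfold nuN
  have e1 : (ℓ + 1) / 2 = ℓ / 2 + 1 := by omega
  have e2 : (ℓ + 1) % 2 = 0 := by omega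
  rw [e1, e2, h, Nat.mul_succ]
  omega

lemma nuN_pos_of_odd {ℓ : ℕ} (h : ℓ % 2 = 1) : 1 ≤ nuN N ℓ := by
  unfold nuN; omega

lemma N_le_nuN_of_even {ℓ : ℕ} (h : ℓ % 2 = 0) (hℓ : 1 ≤ ℓ) : N ≤ nuN N ℓ := by
  unfold nuN
  have h1 : 1 ≤ ℓ / 2 := by omega
  have := Nat.mul_le_mul_left N h1
  omega

/-! ### Admissibility basics -/

lemma adm_infix {l l' : List (Fin n)} (h : Admissible n N l) (h' : l' <:+: l) :
    Admissible n N l' := fun ⟨w, h1, hc, h3⟩ => h ⟨w, h1, hc, h3.trans h'⟩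

/-! ### Index language -/

section Idx

variable (N) (z : Fin n) (W : List (Fin n))

/-- there is a descent at index `i`. -/
def Dsc (i : ℕ) : Prop := W.getD (i + 1) z < W.getD i z

/-- the segment of indices `[a, b)` is strictly decreasing. -/
def Ch (a b : ℕ) : Prop := ∀ i, a ≤ i → i + 1 < b → Dsc z W i

/-- the suffix starting at `c` is admissible, in index language. -/
def Ad (c : ℕ) : Prop :=
  ∀ j, c ≤ j → j + N ≤ W.length → ∃ i, j ≤ i ∧ i + 1 < j + N ∧ ¬ Dsc z W i

def MemI (c : ℕ) : Prop := c ≤ W.length ∧ Ch z W 0 c ∧ Ad N z W c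

def UpE (c : ℕ) : Prop := c < W.length ∧ Ch z W 0 (c + 1)

def UpO (c : ℕ) : Prop := c + N - 1 ≤ W.length ∧ Ch z W (c - 1) (c + N - 1)

def UpP (ℓ : ℕ) : Prop :=
  if ℓ % 2 = 0 then UpE z W (nuN N ℓ) else UpO N z W (nuN N ℓ)

open Classical in
noncomputable def gstep (ℓ : ℕ) : ℕ := if UpP N z W ℓ then ℓ + 1 else ℓ - 1

end Idx

/-! ### Translation lemmas -/

variable {z : Fin n} {W : List (Fin n)}

lemma chain'_seg_iff {a b : ℕ} (hb : b ≤ W.length) :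
    ((W.take b).drop a).Chain' (· > ·) ↔ Ch z W a b := by
  rw [List.Chain', List.isChain_iff_getElem]
  have hlen : ((W.take b).drop a).length = b - a := by simp; omega
  constructor
  · intro h i hai hib
    have := h (i - a) (by rw [hlen]; omega)
    simp only [List.get_eq_getElem, List.getElem_drop, List.getElem_take] at this
    unfold Dsc
    rw [List.getD_eq_getElem _ _ (by omega), List.getD_eq_getElem _ _ (by omega)]
    have e1 : a + (i - a) = i := by omega
    have e2 : a + (i - a + 1) = i + 1 := by omega
    simp only [e1, e2] at this
    exact this
  · intro h i hi
    rw [hlen] at hi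
    have h1 := h (a + i) (by omega) (by omega)
    unfold Dsc at h1
    rw [List.getD_eq_getElem _ _ (by omega), List.getD_eq_getElem _ _ (by omega)] at h1
    simp only [List.get_eq_getElem, List.getElem_drop, List.getElem_take]
    have e1 : a + (i + 1) = a + i + 1 := by omega
    simp only [e1]
    exact h1

lemma chain'_take_iff {c : ℕ} (hc : c ≤ W.length) :
    (W.take c).Chain' (· > ·) ↔ Ch z W 0 c := by
  rw [← List.drop_zero (l := W.take c)]
  exact chain'_seg_iff hc

lemma drop_take_seg (a b : ℕ) : (W.drop a).take b = (W.take (a + b)).drop a := by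
  rw [List.drop_take]
  congr 1
  omega

lemma adm_drop_iff {c : ℕ} (hc : c ≤ W.length) :
    Admissible n N (W.drop c) ↔ Ad N z W c := by
  constructor
  · intro h j hcj hjN
    by_contra hcon
    push_neg at hcon
    refine h ⟨(W.drop j).take N, ?_, ?_, ?_⟩
    · rw [List.length_take, List.length_drop]; omega
    · rw [drop_take_seg, chain'_seg_iff (W := W) (a := j) (b := j + N) (by omega)]
      intro i h1 h2
      exact hcon i h1 h2
    · have h1 : W.drop j = (W.drop c).drop (j - c) := by
        rw [List.drop_drop]; congr 1; omega
      rw [h1]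
      exact (List.take_prefix _ _).isInfix.trans (List.drop_suffix _ _).isInfix
  · rintro hAd ⟨w, hwl, hwc, hinf⟩
    obtain ⟨s, t, hst⟩ := hinf
    have hlen := congrArg List.length hst
    simp only [List.length_append, List.length_drop, hwl] at hlen
    have hjN : c + s.length + N ≤ W.length := by omega
    obtain ⟨i, hi1, hi2, hi3⟩ := hAd (c + s.length) (by omega) hjN
    apply hi3
    have hWj : W.drop (c + s.length) = w ++ t := by
      have h1 : W.drop (c + s.length) = (W.drop c).drop s.length := by
        rw [List.drop_drop, Nat.add_comm]
      rw [h1, ← hst, List.append_assoc, List.drop_left]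
    have hw : (W.take (c + s.length + N)).drop (c + s.length) = w := by
      rw [← drop_take_seg, hWj, ← hwl, List.take_left]
    have := (chain'_seg_iff (z := z) (W := W) (a := c + s.length)
      (b := c + s.length + N) (by omega)).mp (by rw [hw]; exact hwc)
    exact this i hi1 (by omega)

/-! ### The four moves, in index language -/

lemma move1 (hN : 2 ≤ N) {c : ℕ} (hM : MemI N z W c) (hup : UpE z W c) :
    MemI N z W (c + 1) ∧ ¬ UpO N z W (c + 1) := by
  obtain ⟨hc, hch, had⟩ := hM
  obtain ⟨h1, h2⟩ := hup
  constructor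
  · exact ⟨by omega, h2, fun j hj hjN => had j (by omega) hjN⟩
  · rintro ⟨hb, hch2⟩
    obtain ⟨i, hi1, hi2, hi3⟩ := had c le_rfl (by omega)
    exact hi3 (hch2 i (by omega) (by omega))

lemma move2 (h2 : 2 ≤ N) {c : ℕ} (hM : MemI N z W c) (hcN : N ≤ c)
    (hnup : ¬ UpE z W c) :
    MemI N z W (c - N + 1) ∧ UpO N z W (c - N + 1) := by
  obtain ⟨hc, hch, had⟩ := hM
  have hAd : Ad N z W (c - N + 1) := by
    intro j hj hjN
    by_cases hjc : c ≤ j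
    · exact had j hjc hjN
    · push_neg at hjc
      have hclt : c < W.length := by omega
      have hnc : ¬ Dsc z W (c - 1) := by
        intro hd
        apply hnup
        refine ⟨hclt, fun i h0 hi => ?_⟩
        rcases Nat.lt_or_ge (i + 1) c with h | h
        · exact hch i h0 h
        · have he : i = c - 1 := by omega
          rwa [he]
      exact ⟨c - 1, by omega, by omega, hnc⟩
  refine ⟨⟨by omega, fun i h0 hi => hch i h0 (by omega), hAd⟩,
    ⟨by omega, fun i hi1 hi2 => hch i (by omega) (by omega)⟩⟩

lemma move3 (hN : 2 ≤ N) {c : ℕ} (hM : MemI N z W c) (hc1 : 1 ≤ c) (hup : UpO N z W c) :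
    MemI N z W (c + N - 1) ∧ ¬ UpE z W (c + N - 1) := by
  obtain ⟨hc, hch, had⟩ := hM
  obtain ⟨h1, h2⟩ := hup
  constructor
  · refine ⟨h1, fun i h0 hi => ?_, fun j hj hjN => had j (by omega) hjN⟩
    rcases Nat.lt_or_ge (i + 1) c with h | h
    · exact hch i h0 h
    · exact h2 i (by omega) hi
  · rintro ⟨hl, hchN⟩
    obtain ⟨i, hi1, hi2, hi3⟩ := had c le_rfl (by omega)
    exact hi3 (hchN i (by omega) (by omega))

lemma move4 (hN : 2 ≤ N) {c : ℕ} (hM : MemI N z W c) (hc1 : 1 ≤ c) (hnup : ¬ UpO N z W c) :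
    MemI N z W (c - 1) ∧ UpE z W (c - 1) := by
  obtain ⟨hc, hch, had⟩ := hM
  have hAd : Ad N z W (c - 1) := by
    intro j hj hjN
    by_cases hjc : c ≤ j
    · exact had j hjc hjN
    · push_neg at hjc
      have hj' : j = c - 1 := by omega
      subst hj'
      have hnch : ¬ Ch z W (c - 1) (c + N - 1) := fun hch' => hnup ⟨by omega, hch'⟩
      unfold Ch at hnch
      push_neg at hnch
      obtain ⟨i, hi1, hi2, hi3⟩ := hnch
      exact ⟨i, hi1, by omega, hi3⟩
  exact ⟨⟨by omega, fun i h0 hi => hch i h0 (by omega), hAd⟩,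
    ⟨by omega, fun i h0 hi => hch i h0 (by omega)⟩⟩

/-! ### The key involution lemma -/

lemma gstep_key (h2 : 2 ≤ N) (hm : 1 ≤ W.length) {ℓ : ℕ}
    (hMem : MemI N z W (nuN N ℓ)) :
    MemI N z W (nuN N (gstep N z W ℓ)) ∧ gstep N z W (gstep N z W ℓ) = ℓ ∧
      (gstep N z W ℓ = ℓ + 1 ∨ (1 ≤ ℓ ∧ gstep N z W ℓ = ℓ - 1)) := by
  rcases Nat.even_or_odd ℓ with hpar | hpar
  · -- ℓ even
    have hmod : ℓ % 2 = 0 := Nat.even_iff.mp hpar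
    by_cases hup : UpP N z W ℓ
    · -- up move
      have hg : gstep N z W ℓ = ℓ + 1 := if_pos hup
      have hup' : UpE z W (nuN N ℓ) := by
        unfold UpP at hup; rwa [if_pos hmod] at hup
      obtain ⟨hM1, hnup1⟩ := move1 h2 hMem hup'
      have hν : nuN N (ℓ + 1) = nuN N ℓ + 1 := nuN_succ_even hmod
      have hmod1 : (ℓ + 1) % 2 = 1 := by omega
      have hnup2 : ¬ UpP N z W (ℓ + 1) := by
        unfold UpP
        rw [if_neg (by omega), hν]
        exact hnup1
      have hg2 : gstep N z W (ℓ + 1) = ℓ := by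
        unfold gstep; rw [if_neg hnup2]; omega
      rw [hg, hν]
      exact ⟨hM1, hg2, Or.inl rfl⟩
    · -- down move
      have hℓ1 : 1 ≤ ℓ := by
        by_contra h0
        have hℓ0 : ℓ = 0 := by omega
        apply hup
        unfold UpP
        rw [if_pos hmod]
        subst hℓ0
        have hν0 : nuN N 0 = 0 := by simp [nuN]
        rw [hν0]
        exact ⟨by omega, fun i h0 hi => absurd hi (by omega)⟩
      have hup' : ¬ UpE z W (nuN N ℓ) := by
        intro h; apply hup; unfold UpP; rwa [if_pos hmod]
      have hcN : N ≤ nuN N ℓ := N_le_nuN_of_even hmod hℓ1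
      obtain ⟨hM1, hup1⟩ := move2 h2 hMem hcN hup'
      have hg : gstep N z W ℓ = ℓ - 1 := if_neg hup
      have hmod1 : (ℓ - 1) % 2 = 1 := by omega
      have hν : nuN N (ℓ - 1) = nuN N ℓ - N + 1 := by
        have := nuN_succ_odd (N := N) hmod1
        have he : ℓ - 1 + 1 = ℓ := by omega
        rw [he] at this
        have h1 : 1 ≤ nuN N (ℓ - 1) := nuN_pos_of_odd hmod1
        omega
      have hup2 : UpP N z W (ℓ - 1) := by
        unfold UpP
        rw [if_neg (by omega), hν]
        exact hup1
      have hg2 : gstep N z W (ℓ - 1) = ℓ := by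
        unfold gstep; rw [if_pos hup2]; omega
      rw [hg, hν]
      exact ⟨hM1, hg2, Or.inr ⟨hℓ1, rfl⟩⟩
  · -- ℓ odd
    have hmod : ℓ % 2 = 1 := Nat.odd_iff.mp hpar
    have hc1 : 1 ≤ nuN N ℓ := nuN_pos_of_odd hmod
    by_cases hup : UpP N z W ℓ
    · have hg : gstep N z W ℓ = ℓ + 1 := if_pos hup
      have hup' : UpO N z W (nuN N ℓ) := by
        unfold UpP at hup; rwa [if_neg (by omega)] at hup
      obtain ⟨hM1, hnup1⟩ := move3 h2 hMem hc1 hup'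
      have hν : nuN N (ℓ + 1) = nuN N ℓ + N - 1 := nuN_succ_odd hmod
      have hnup2 : ¬ UpP N z W (ℓ + 1) := by
        unfold UpP
        rw [if_pos (by omega), hν]
        exact hnup1
      have hg2 : gstep N z W (ℓ + 1) = ℓ := by
        unfold gstep; rw [if_neg hnup2]; omega
      rw [hg, hν]
      exact ⟨hM1, hg2, Or.inl rfl⟩
    · have hup' : ¬ UpO N z W (nuN N ℓ) := by
        intro h; apply hup; unfold UpP; rwa [if_neg (by omega)]
      obtain ⟨hM1, hup1⟩ := move4 h2 hMem hc1 hup'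
      have hg : gstep N z W ℓ = ℓ - 1 := if_neg hup
      have hℓ1 : 1 ≤ ℓ := by omega
      have hmod1 : (ℓ - 1) % 2 = 0 := by omega
      have hν : nuN N (ℓ - 1) = nuN N ℓ - 1 := by
        have := nuN_succ_even (N := N) hmod1
        have he : ℓ - 1 + 1 = ℓ := by omega
        rw [he] at this
        omega
      have hup2 : UpP N z W (ℓ - 1) := by
        unfold UpP
        rw [if_pos hmod1, hν]
        exact hup1
      have hg2 : gstep N z W (ℓ - 1) = ℓ := by
        unfold gstep; rw [if_pos hup2]; omega
      rw [hg, hν]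
      exact ⟨hM1, hg2, Or.inr ⟨hℓ1, rfl⟩⟩

/-! ### Counting lemmas -/

lemma chain'_ofFn_iff {c : ℕ} (u : Fin c → Fin n) :
    (List.ofFn u).Chain' (· > ·) ↔ StrictAnti u := by
  constructor
  · intro h
    match c, u with
    | 0, u => intro a b hab; exact a.elim0
    | (c + 1), u =>
      rw [Fin.strictAnti_iff_succ_lt]
      intro i
      rw [List.Chain', List.isChain_iff_getElem] at h
      have hlt : (i : ℕ) + 1 < (List.ofFn u).length := by simp
      have h1 := h i.1 hlt
      simp only [List.getElem_ofFn] at h1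
      exact h1
  · intro h
    rw [List.Chain', List.isChain_iff_getElem]
    intro i hi
    simp only [List.length_ofFn] at hi
    simp only [List.getElem_ofFn]
    exact h (by simp [Fin.lt_def])

lemma card_strictAnti (c : ℕ) :
    Nat.card {u : Fin c → Fin n // StrictAnti u} = n.choose c := by
  classical
  have hrev : StrictAnti (Fin.rev : Fin c → Fin c) := fun a b h => by
    simpa [Fin.rev_lt_rev] using h
  have e2 : {u : Fin c → Fin n // StrictAnti u} ≃ {f : Fin c → Fin n // StrictMono f} :=
  { toFun := fun u => ⟨u.1 ∘ Fin.rev, u.2.comp hrev⟩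
    invFun := fun f => ⟨f.1 ∘ Fin.rev, f.2.comp_strictAnti hrev⟩
    left_inv := fun u => by
      apply Subtype.ext; funext i; simp [Function.comp, Fin.rev_rev]
    right_inv := fun f => by
      apply Subtype.ext; funext i; simp [Function.comp, Fin.rev_rev] }
  have e3 : {f : Fin c → Fin n // StrictMono f} ≃ {s : Finset (Fin n) // s.card = c} :=
  { toFun := fun f => ⟨Finset.univ.image f.1, by
      rw [Finset.card_image_of_injective _ f.2.injective, Finset.card_univ, Fintype.card_fin]⟩
    invFun := fun s => ⟨s.1.orderEmbOfFin s.2, (s.1.orderEmbOfFin s.2).strictMono⟩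
    left_inv := fun f => by
      apply Subtype.ext
      exact (Finset.orderEmbOfFin_unique _ (fun x => Finset.mem_image_of_mem _ (Finset.mem_univ x))
        f.2).symm
    right_inv := fun s => by
      apply Subtype.ext
      apply Finset.coe_injective
      rw [Finset.coe_image, Finset.coe_univ, Set.image_univ]
      exact Finset.range_orderEmbOfFin s.1 s.2 }
  rw [Nat.card_congr (e2.trans e3), Nat.card_eq_fintype_card, Fintype.card_finset_len,
    Fintype.card_fin]

lemma Lword_eq (k : ℕ) :
    Lword n N k = Nat.card {v : Fin k → Fin n // Admissible n N (List.ofFn v)} := by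
  apply Nat.card_congr
  refine
  { toFun := fun l => ⟨fun i => l.1.get ⟨i.1, by rw [l.2.1]; exact i.2⟩, ?_⟩
    invFun := fun v => ⟨List.ofFn v.1, List.length_ofFn, v.2⟩
    left_inv := fun l => ?_
    right_inv := fun v => ?_ }
  · obtain ⟨l, hl, ha⟩ := l
    have he : (List.ofFn fun i : Fin k => l.get ⟨i.1, by rw [hl]; exact i.2⟩) = l := by
      apply List.ext_get
      · simp [hl]
      · intro i h1 h2
        simp [List.get_ofFn]
    rw [he]
    exact ha
  · apply Subtype.ext
    dsimp only
    apply List.ext_get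
    · simp [l.2.1]
    · intro i h1 h2
      simp [List.get_ofFn]
  · apply Subtype.ext
    funext i
    simp [List.get_ofFn]

def splitEquiv (c d : ℕ) : (Fin (c + d) → Fin n) ≃ (Fin c → Fin n) × (Fin d → Fin n) where
  toFun w := (fun i => w (Fin.castAdd d i), fun i => w (Fin.natAdd c i))
  invFun p := fun i => Fin.addCases p.1 p.2 i
  left_inv w := by
    funext i
    refine Fin.addCases (fun j => ?_) (fun j => ?_) i <;> simp
  right_inv p := by
    refine Prod.ext (funext fun i => ?_) (funext fun i => ?_) <;> simp

lemma count_lemma {m c : ℕ} (hc : c ≤ m) :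
    Nat.card {w : Fin m → Fin n //
      ((List.ofFn w).take c).Chain' (· > ·) ∧ Admissible n N ((List.ofFn w).drop c)}
    = n.choose c * Lword n N (m - c) := by
  classical
  obtain ⟨d, rfl⟩ : ∃ d, m = c + d := ⟨m - c, by omega⟩
  have hd : c + d - c = d := by omega
  rw [hd]
  have hiff : ∀ w : Fin (c + d) → Fin n,
      (((List.ofFn w).take c).Chain' (· > ·) ∧ Admissible n N ((List.ofFn w).drop c)) ↔
      ((List.ofFn ((splitEquiv c d) w).1).Chain' (· > ·) ∧
        Admissible n N (List.ofFn ((splitEquiv c d) w).2)) := by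
    intro w
    have hsplit : List.ofFn w =
        List.ofFn (fun i : Fin c => w (Fin.castAdd d i)) ++
          List.ofFn (fun i : Fin d => w (Fin.natAdd c i)) := List.ofFn_add (f := w)
    have h1 : (List.ofFn w).take c = List.ofFn (fun i : Fin c => w (Fin.castAdd d i)) := by
      rw [hsplit, List.take_left' List.length_ofFn]
    have h2 : (List.ofFn w).drop c = List.ofFn (fun i : Fin d => w (Fin.natAdd c i)) := by
      rw [hsplit, List.drop_left' List.length_ofFn]
    rw [h1, h2]
    exact Iff.rfl
  have e1 := (Equiv.subtypeEquiv (splitEquiv (n := n) c d) hiff).trans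
    (Equiv.subtypeProdEquivProd
      (p := fun u : Fin c → Fin n => (List.ofFn u).Chain' (· > ·))
      (q := fun v : Fin d → Fin n => Admissible n N (List.ofFn v)))
  rw [Nat.card_congr e1, Nat.card_prod]
  congr 1
  · rw [← card_strictAnti c]
    apply Nat.card_congr
    exact Equiv.subtypeEquivRight fun u => chain'_ofFn_iff u
  · exact (Lword_eq d).symm

end AntiProof

open AntiProof in
/-- **Coefficientwise form of the numerical Hilbert series identity**:
for every `m ≥ 1`, `∑_{ℓ≥0, ν_N(ℓ) ≤ m} (-1)^ℓ C(n, ν_N(ℓ)) L(n, N, m − ν_N(ℓ)) = 0`. -/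
theorem antisymmetrizer_alternating_sum (n N : ℕ) (h2 : 2 ≤ N) (hn : N ≤ n)
    (m : ℕ) (hm : 1 ≤ m) :
    ∑ ℓ ∈ Finset.range (m + 1),
      (if nuN N ℓ ≤ m then
        (-1 : ℤ) ^ ℓ * (Nat.choose n (nuN N ℓ) : ℤ) * (Lword n N (m - nuN N ℓ) : ℤ)
      else 0) = 0 := by
  classical
  have hn2 : 2 ≤ n := le_trans h2 hn
  set z : Fin n := ⟨0, by omega⟩ with hz
  set Q : (Fin m → Fin n) × ℕ → Prop := fun p =>
    nuN N p.2 ≤ m ∧ ((List.ofFn p.1).take (nuN N p.2)).Chain' (· > ·) ∧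
      Admissible n N ((List.ofFn p.1).drop (nuN N p.2)) with hQ
  set S : Finset ((Fin m → Fin n) × ℕ) :=
    (Finset.univ ×ˢ Finset.range (m + 1)).filter Q with hS
  have hWlen : ∀ w : Fin m → Fin n, (List.ofFn w).length = m := fun w => List.length_ofFn
  -- membership in S ↔ MemI
  have hmemI : ∀ p : (Fin m → Fin n) × ℕ, p ∈ S ↔
      p.2 ≤ m ∧ MemI N z (List.ofFn p.1) (nuN N p.2) := by
    intro p
    rw [hS, Finset.mem_filter, Finset.mem_product, Finset.mem_range]
    constructor
    · rintro ⟨⟨-, h2'⟩, hν, hch, had⟩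
      refine ⟨by omega, by rwa [hWlen], ?_, ?_⟩
      · rwa [← chain'_take_iff (by rwa [hWlen])]
      · rwa [← adm_drop_iff (by rwa [hWlen])]
    · rintro ⟨hp2, hν, hch, had⟩
      rw [hWlen] at hν
      refine ⟨⟨Finset.mem_univ _, by omega⟩, hν, ?_, ?_⟩
      · rwa [chain'_take_iff (by rwa [hWlen])]
      · rwa [adm_drop_iff (z := z) (by rwa [hWlen])]
  -- step 1: the sum equals a signed sum over S
  have hsum : ∑ ℓ ∈ Finset.range (m + 1),
      (if nuN N ℓ ≤ m then
        (-1 : ℤ) ^ ℓ * (Nat.choose n (nuN N ℓ) : ℤ) * (Lword n N (m - nuN N ℓ) : ℤ)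
      else 0) = ∑ p ∈ S, (-1 : ℤ) ^ p.2 := by
    rw [hS, Finset.sum_filter, Finset.sum_product_right]
    apply Finset.sum_congr rfl
    intro ℓ hℓ
    by_cases hν : nuN N ℓ ≤ m
    · rw [if_pos hν]
      have hfc : (Finset.univ.filter fun w : Fin m → Fin n => Q (w, ℓ)) =
          Finset.univ.filter (fun w : Fin m → Fin n =>
            ((List.ofFn w).take (nuN N ℓ)).Chain' (· > ·) ∧
              Admissible n N ((List.ofFn w).drop (nuN N ℓ))) :=
        Finset.filter_congr fun w _ => by simp [hQ, hν]
      have hcard : (Finset.univ.filter fun w : Fin m → Fin n => Q (w, ℓ)).card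
          = n.choose (nuN N ℓ) * Lword n N (m - nuN N ℓ) := by
        rw [hfc, ← Fintype.card_subtype, ← Nat.card_eq_fintype_card]
        exact count_lemma hν
      have hrhs : ∑ w : Fin m → Fin n, (if Q (w, ℓ) then (-1 : ℤ) ^ ℓ else 0)
          = ((Finset.univ.filter fun w : Fin m → Fin n => Q (w, ℓ)).card : ℤ) * (-1) ^ ℓ := by
        rw [← Finset.sum_filter, Finset.sum_const, nsmul_eq_mul]
      calc (-1 : ℤ) ^ ℓ * (Nat.choose n (nuN N ℓ) : ℤ) * (Lword n N (m - nuN N ℓ) : ℤ)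
          = ((Finset.univ.filter fun w : Fin m → Fin n => Q (w, ℓ)).card : ℤ) * (-1) ^ ℓ := by
            rw [hcard]; push_cast; ring
        _ = ∑ w : Fin m → Fin n, (if Q (w, ℓ) then (-1 : ℤ) ^ ℓ else 0) := hrhs.symm
        _ = ∑ w : Fin m → Fin n, (if Q (w, ℓ) then (-1 : ℤ) ^ (w, ℓ).2 else 0) := rfl
    · rw [if_neg hν]
      symm
      apply Finset.sum_eq_zero
      intro w _
      rw [if_neg]
      intro hQw
      exact hν hQw.1
  rw [hsum]
  -- step 2: involution
  refine Finset.sum_involution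
    (fun p _ => (p.1, gstep N z (List.ofFn p.1) p.2)) ?_ ?_ ?_ ?_
  · -- cancellation
    intro p hp
    obtain ⟨hp2, hM⟩ := (hmemI p).mp hp
    obtain ⟨-, -, hstep⟩ := gstep_key h2 (by rw [hWlen]; exact hm) hM
    show (-1 : ℤ) ^ p.2 + (-1 : ℤ) ^ (gstep N z (List.ofFn p.1) p.2) = 0
    rcases hstep with h | ⟨h1, h⟩ <;> rw [h]
    · rw [pow_succ]; ring
    · have e : p.2 = (p.2 - 1) + 1 := by omega
      rw [e, Nat.add_sub_cancel, pow_succ]; ring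
  · -- g p ≠ p
    intro p hp _
    obtain ⟨hp2, hM⟩ := (hmemI p).mp hp
    obtain ⟨-, -, hstep⟩ := gstep_key h2 (by rw [hWlen]; exact hm) hM
    intro hcon
    have h2' : gstep N z (List.ofFn p.1) p.2 = p.2 := congrArg Prod.snd hcon
    rcases hstep with h | ⟨h1, h⟩ <;> omega
  · -- g p ∈ S
    intro p hp
    obtain ⟨hp2, hM⟩ := (hmemI p).mp hp
    obtain ⟨hM', -, hstep⟩ := gstep_key h2 (by rw [hWlen]; exact hm) hM
    show (p.1, gstep N z (List.ofFn p.1) p.2) ∈ S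
    rw [hmemI]
    refine ⟨?_, hM'⟩
    have hle := le_nuN (N := N) h2 (gstep N z (List.ofFn p.1) p.2)
    have hb := hM'.1
    rw [hWlen] at hb
    exact le_trans hle hb
  · -- g (g p) = p
    intro p hp
    obtain ⟨hp2, hM⟩ := (hmemI p).mp hp
    obtain ⟨-, hinv, -⟩ := gstep_key h2 (by rw [hWlen]; exact hm) hM
    show ((p.1 : Fin m → Fin n), gstep N z (List.ofFn p.1) (gstep N z (List.ofFn p.1) p.2)) = p
    rw [hinv]
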